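/- For n ≥ 1 and γ ∈ (0,1), the Kelvin transform on the upper half-space preserves the weighted L^{2(n-2γ+2)/(n-2γ)} norm: for any measurable U : ℝ^{n+1}_+ → ℝ, setting U♯(x) = |x|^{-(n-2γ)} U(x/|x|²), one has ∫_{ℝ^{n+1}_+} x_N^{1-2γ} |U♯(x)|^{2(n-2γ+2)/(n-2γ)} dx = ∫_{ℝ^{n+1}_+} x_N^{1-2γ} |U(x)|^{2(n-2γ+2)/(n-2γ)} dx. -/

import Mathlib

open MeasureTheory Real

lemma abs_det_reflection {E : Type*} [NormedAddCommGroup E] [InnerProductSpace ℝ E]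
    (K : Submodule ℝ E) [K.HasOrthogonalProjection] :
    |LinearMap.det ((Submodule.reflection K : E →L[ℝ] E) : E →ₗ[ℝ] E)| = 1 := by
  have h : ((Submodule.reflection K : E →L[ℝ] E) : E →ₗ[ℝ] E) ∘ₗ
      ((Submodule.reflection K : E →L[ℝ] E) : E →ₗ[ℝ] E) = LinearMap.id := by
    ext x
    simp [Submodule.reflection_reflection]
  have hd := congrArg LinearMap.det h
  rw [LinearMap.det_comp, LinearMap.det_id] at hd
  rcases mul_self_eq_one_iff.1 hd with h1 | h1 <;> rw [h1] <;> norm_num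

/-- The Kelvin transform `U♯(x) = |x|^{-(n-2γ)} U(x/|x|²)` on the upper half-space
`ℝ^{n+1}_+ = {x : x_N > 0}` preserves the weighted `L^{2(n-2γ+2)/(n-2γ)}` norm with
weight `x_N^{1-2γ}`:
`∫_{ℝ^{n+1}_+} x_N^{1-2γ} |U♯|^{2(n-2γ+2)/(n-2γ)} = ∫_{ℝ^{n+1}_+} x_N^{1-2γ} |U|^{2(n-2γ+2)/(n-2γ)}`. -/
theorem stmt3 (n : ℕ) (hn : 1 ≤ n) (γ : ℝ) (hγ : γ ∈ Set.Ioo (0:ℝ) 1)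
    (U UK : EuclideanSpace ℝ (Fin (n+1)) → ℝ) (hU : Measurable U)
    (hUK : ∀ x, UK x = ‖x‖ ^ (-((n:ℝ) - 2*γ)) * U ((‖x‖ ^ 2)⁻¹ • x)) :
    ∫ x in {x : EuclideanSpace ℝ (Fin (n+1)) | 0 < x (Fin.last n)},
        (x (Fin.last n)) ^ (1-2*γ) * |UK x| ^ (2*((n:ℝ)-2*γ+2)/((n:ℝ)-2*γ))
      = ∫ x in {x : EuclideanSpace ℝ (Fin (n+1)) | 0 < x (Fin.last n)},
        (x (Fin.last n)) ^ (1-2*γ) * |U x| ^ (2*((n:ℝ)-2*γ+2)/((n:ℝ)-2*γ)) := by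
  obtain ⟨hγ0, hγ1⟩ := hγ
  set N := Fin.last n with hN
  set S : Set (EuclideanSpace ℝ (Fin (n+1))) := {x | 0 < x N} with hSdef
  set p : ℝ := 2*((n:ℝ)-2*γ+2)/((n:ℝ)-2*γ) with hp
  by_cases hne : (n:ℝ) - 2*γ = 0
  · -- degenerate case: n = 1, γ = 1/2, both integrands are ≡ 1
    have hn2 : (n:ℝ) < 2 := by linarith
    have hn1 : n = 1 := by
      have h2' : n < 2 := by exact_mod_cast hn2
      omega
    have h12 : 1 - 2*γ = 0 := by
      have : (n:ℝ) = 1 := by exact_mod_cast hn1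
      linarith
    rw [hp, hne, div_zero, h12]
    simp
  · -- main case: change of variables by the inversion
    set f : EuclideanSpace ℝ (Fin (n+1)) → EuclideanSpace ℝ (Fin (n+1)) :=
      EuclideanGeometry.inversion (0 : EuclideanSpace ℝ (Fin (n+1))) 1 with hf
    have hfeq : ∀ x, f x = (‖x‖ ^ 2)⁻¹ • x := by
      intro x
      simp [hf, EuclideanGeometry.inversion, dist_eq_norm, one_div]
    have hinv : Function.Involutive f := fun x =>
      EuclideanGeometry.inversion_inversion 0 one_ne_zero x
    have hmaps : ∀ x ∈ S, f x ∈ S := by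
      intro x hx
      have hxN : 0 < x N := hx
      have hx0 : x ≠ 0 := by
        intro h; rw [h] at hxN; simp at hxN
      have hr : (0:ℝ) < ‖x‖ := norm_pos_iff.2 hx0
      have : f x N = (‖x‖ ^ 2)⁻¹ * x N := by
        rw [hfeq]; rfl
      show 0 < f x N
      rw [this]
      positivity
    have himg : f '' S = S := by
      apply Set.Subset.antisymm
      · rintro y ⟨x, hx, rfl⟩; exact hmaps x hx
      · intro y hy
        exact ⟨f y, hmaps y hy, hinv y⟩
    have hSm : MeasurableSet S := by
      have : Continuous fun x : EuclideanSpace ℝ (Fin (n+1)) => x N :=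
        (EuclideanSpace.proj N).continuous
      exact (isOpen_lt continuous_const this).measurableSet
    -- the derivative
    set f' : EuclideanSpace ℝ (Fin (n+1)) →
        (EuclideanSpace ℝ (Fin (n+1)) →L[ℝ] EuclideanSpace ℝ (Fin (n+1))) :=
      fun x => ((1 / ‖x‖) ^ 2) •
        (Submodule.reflection (ℝ ∙ x)ᗮ : EuclideanSpace ℝ (Fin (n+1)) →L[ℝ] EuclideanSpace ℝ (Fin (n+1)))
      with hf'
    have hder : ∀ x ∈ S, HasFDerivWithinAt f (f' x) S x := by
      intro x hx
      have hxN : 0 < x N := hx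
      have hx0 : x ≠ 0 := by
        intro h; rw [h] at hxN; simp at hxN
      have h := EuclideanGeometry.hasFDerivAt_inversion
        (c := (0 : EuclideanSpace ℝ (Fin (n+1)))) (R := 1) hx0
      simp only [dist_zero_right, sub_zero] at h
      exact h.hasFDerivWithinAt
    have key := integral_image_eq_integral_abs_det_fderiv_smul volume hSm hder
      (hinv.injective.injOn)
      (fun y => (y N) ^ (1-2*γ) * |U y| ^ p)
    rw [himg] at key
    rw [key]
    apply setIntegral_congr_fun hSm
    intro x hx
    have hxN : 0 < x N := hx
    have hx0 : x ≠ 0 := by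
      intro h; rw [h] at hxN; simp at hxN
    have hr : (0:ℝ) < ‖x‖ := norm_pos_iff.2 hx0
    -- determinant computation
    have hdet : |(f' x).det| = ‖x‖ ^ (-(2*((n:ℝ)+1))) := by
      have h1 : (f' x).det =
          ((1 / ‖x‖) ^ 2) ^ (n+1) *
            LinearMap.det ((Submodule.reflection (ℝ ∙ x)ᗮ :
              EuclideanSpace ℝ (Fin (n+1)) →L[ℝ] EuclideanSpace ℝ (Fin (n+1))) :
              EuclideanSpace ℝ (Fin (n+1)) →ₗ[ℝ] EuclideanSpace ℝ (Fin (n+1))) := by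
        rw [hf']
        simp only [ContinuousLinearMap.det, ContinuousLinearMap.coe_smul]
        rw [LinearMap.det_smul, finrank_euclideanSpace_fin]
      rw [h1, abs_mul, abs_det_reflection, mul_one, abs_pow, abs_pow,
        abs_of_pos (by positivity : (0:ℝ) < 1 / ‖x‖), one_div, ← pow_mul,
        ← Real.rpow_natCast (‖x‖⁻¹), ← Real.rpow_neg_one ‖x‖, ← Real.rpow_mul hr.le]
      congr 1
      push_cast
      ring
    -- pointwise identity
    have hfxN : f x N = (‖x‖ ^ 2)⁻¹ * x N := by rw [hfeq]; rfl
    have hUKx : |UK x| = ‖x‖ ^ (-((n:ℝ)-2*γ)) * |U (f x)| := by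
      rw [hUK x, abs_mul, abs_of_pos (Real.rpow_pos_of_pos hr _), hfeq]
    have hpp : ((n:ℝ)-2*γ) * p = 2*((n:ℝ)-2*γ+2) := by
      rw [hp]; field_simp
    have h2 : (‖x‖ ^ 2)⁻¹ = ‖x‖ ^ (-2:ℝ) := by
      rw [← Real.rpow_natCast ‖x‖ 2, ← Real.rpow_neg hr.le]
      norm_num
    have e1 : |UK x| ^ p = ‖x‖ ^ (-((n:ℝ)-2*γ) * p) * |U (f x)| ^ p := by
      rw [hUKx, Real.mul_rpow (Real.rpow_nonneg hr.le _) (abs_nonneg _),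
        ← Real.rpow_mul hr.le]
    have e2 : f x N ^ (1-2*γ) = ‖x‖ ^ (-2*(1-2*γ)) * x N ^ (1-2*γ) := by
      rw [hfxN, Real.mul_rpow (by positivity) hxN.le, h2, ← Real.rpow_mul hr.le]
    have hexp : -((n:ℝ)-2*γ) * p = -(2*((n:ℝ)+1)) + -2*(1-2*γ) := by
      have := hpp; nlinarith [hpp]
    show x N ^ (1-2*γ) * |UK x| ^ p = |(f' x).det| • (f x N ^ (1-2*γ) * |U (f x)| ^ p)
    rw [smul_eq_mul, hdet, e1, e2, hexp, Real.rpow_add hr]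
    ring
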